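/- For every n ≥ 3 and 1 ≤ k < n/2, the co-spectrum of the generalized Petersen graph P(n, k), i.e., the set of all sizes of bonds of P(n,k), contains every integer from 3 to n + 2. -/
import Mathlib


open SimpleGraph

/-- An edge-cut of `G`: a set of edges of `G` whose deletion disconnects `G`. -/
def IsEdgeCut {V : Type*} (G : SimpleGraph V) (S : Set (Sym2 V)) : Prop :=
  S ⊆ G.edgeSet ∧ ¬ (G.deleteEdges S).Connected

/-- A bond: a minimal nonempty edge-cut. -/
def IsBond {V : Type*} (G : SimpleGraph V) (S : Set (Sym2 V)) : Prop :=
  S.Nonempty ∧ IsEdgeCut G S ∧ ∀ T ⊂ S, T.Nonempty → ¬ IsEdgeCut G T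

/-- A largest bond: a bond of maximum size. -/
def IsLargestBond {V : Type*} (G : SimpleGraph V) (S : Set (Sym2 V)) : Prop :=
  IsBond G S ∧ ∀ T, IsBond G T → T.ncard ≤ S.ncard

/-- The set of edges of `G` between `X` and its complement. -/
def crossEdges {V : Type*} (G : SimpleGraph V) (X : Set V) : Set (Sym2 V) :=
  {e ∈ G.edgeSet | ∃ x ∈ X, ∃ y ∈ Xᶜ, e = s(x, y)}

/-- `G` is 2-connected: at least 3 vertices and connected after deleting any ≤ 1 vertices. -/
def TwoConnected {V : Type*} (G : SimpleGraph V) : Prop :=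
  3 ≤ Nat.card V ∧ ∀ s : Set V, s.ncard ≤ 1 → (G.induce sᶜ).Connected

/-- `G` is 3-connected: at least 4 vertices and connected after deleting any ≤ 2 vertices. -/
def ThreeConnected {V : Type*} (G : SimpleGraph V) : Prop :=
  4 ≤ Nat.card V ∧ ∀ s : Set V, s.ncard ≤ 2 → (G.induce sᶜ).Connected

/-- A longest cycle of `G`. -/
def IsLongestCycle {V : Type*} (G : SimpleGraph V) {v : V} (C : G.Walk v v) : Prop :=
  C.IsCycle ∧ ∀ (u : V) (D : G.Walk u u), D.IsCycle → D.length ≤ C.length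

/-- The generalized Petersen graph `P(n, k)`: outer vertices `Sum.inl i` ("xᵢ") and
inner vertices `Sum.inr i` ("yᵢ"), with edges `xᵢxᵢ₊₁`, `xᵢyᵢ`, `yᵢyᵢ₊ₖ` (indices mod n). -/
def GPetersen (n k : ℕ) : SimpleGraph (ZMod n ⊕ ZMod n) :=
  SimpleGraph.fromRel (fun a b =>
    (∃ i : ZMod n, a = Sum.inl i ∧ b = Sum.inl (i + 1)) ∨
    (∃ i : ZMod n, a = Sum.inl i ∧ b = Sum.inr i) ∨
    (∃ i : ZMod n, a = Sum.inr i ∧ b = Sum.inr (i + (k : ZMod n))))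

section General
variable {V : Type*} {G : SimpleGraph V} {W : Set V}

lemma mem_crossEdges {x y : V} (hadj : G.Adj x y) (hx : x ∈ W) (hy : y ∉ W) :
    s(x,y) ∈ crossEdges G W := ⟨hadj, x, hx, y, hy, rfl⟩

lemma deleteCross_adj {x y : V} (h : G.Adj x y) (hxy : x ∈ W ↔ y ∈ W) :
    (G.deleteEdges (crossEdges G W)).Adj x y := by
  rw [SimpleGraph.deleteEdges_adj]
  refine ⟨h, ?_⟩
  rintro ⟨-, u, hu, v, hv, huv⟩
  rw [Sym2.eq_iff] at huv
  rcases huv with ⟨rfl, rfl⟩ | ⟨rfl, rfl⟩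
  · exact hv (hxy.mp hu)
  · exact hv (hxy.mpr hu)

lemma deleteCross_adj_side {a b : V}
    (h : (G.deleteEdges (crossEdges G W)).Adj a b) : (a ∈ W ↔ b ∈ W) := by
  classical
  by_contra hiff
  rw [SimpleGraph.deleteEdges_adj] at h
  rcases Classical.em (a ∈ W) with ha | ha
  · have hb : b ∉ W := fun hb => hiff ⟨fun _ => hb, fun _ => ha⟩
    exact h.2 (mem_crossEdges h.1 ha hb)
  · have hb : b ∈ W := by
      by_contra hb
      exact hiff ⟨fun ha' => absurd ha' ha, fun hb' => absurd hb' hb⟩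
    have : s(b,a) ∈ crossEdges G W := mem_crossEdges h.1.symm hb ha
    rw [Sym2.eq_swap] at this
    exact h.2 this

lemma deleteCross_side {x y : V}
    (h : (G.deleteEdges (crossEdges G W)).Reachable x y) : (x ∈ W ↔ y ∈ W) := by
  obtain ⟨w⟩ := h
  induction w with
  | nil => exact Iff.rfl
  | cons h p ih => exact (deleteCross_adj_side h).trans ih

lemma isBond_crossEdges
    (h1 : ∀ u v, u ∈ W → v ∈ W → (G.deleteEdges (crossEdges G W)).Reachable u v)
    (h2 : ∀ u v, u ∉ W → v ∉ W → (G.deleteEdges (crossEdges G W)).Reachable u v)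
    (hne : (crossEdges G W).Nonempty) :
    IsBond G (crossEdges G W) := by
  refine ⟨hne, ⟨fun e he => he.1, fun hc => ?_⟩, ?_⟩
  · obtain ⟨e, hesub, x₀, hx₀, y₀, hy₀, rfl⟩ := hne
    exact hy₀ ((deleteCross_side (hc.preconnected x₀ y₀)).mp hx₀)
  · rintro T hT - ⟨hTsub, hTdis⟩
    apply hTdis
    obtain ⟨f, hfB, hfT⟩ := Set.exists_of_ssubset hT
    obtain ⟨hfe, x₁, hx₁, y₁, hy₁, rfl⟩ := hfB
    have hmono : G.deleteEdges (crossEdges G W) ≤ G.deleteEdges T := by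
      exact SimpleGraph.deleteEdges_anti hT.subset
    have hx₁y₁ : (G.deleteEdges T).Adj x₁ y₁ := by
      rw [SimpleGraph.deleteEdges_adj]
      exact ⟨hfe, hfT⟩
    have key : ∀ u, (G.deleteEdges T).Reachable u x₁ := by
      intro u
      rcases Classical.em (u ∈ W) with hu | hu
      · exact (h1 u x₁ hu hx₁).mono hmono
      · exact ((h2 u y₁ hu hy₁).mono hmono).trans hx₁y₁.symm.reachable
    rw [SimpleGraph.connected_iff]
    exact ⟨fun u v => (key u).trans (key v).symm, ⟨x₁⟩⟩
end General

section GP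
variable {n k a m : ℕ}

lemma gp_adj_inl_inl {i j : ZMod n} :
    (GPetersen n k).Adj (Sum.inl i) (Sum.inl j) ↔ i ≠ j ∧ (j = i + 1 ∨ i = j + 1) := by
  simp [GPetersen, SimpleGraph.fromRel_adj]

lemma gp_adj_inl_inr {i j : ZMod n} :
    (GPetersen n k).Adj (Sum.inl i) (Sum.inr j) ↔ j = i := by
  simp [GPetersen, SimpleGraph.fromRel_adj]

lemma gp_adj_inr_inr {i j : ZMod n} :
    (GPetersen n k).Adj (Sum.inr i) (Sum.inr j) ↔ i ≠ j ∧ (j = i + k ∨ i = j + k) := by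
  simp [GPetersen, SimpleGraph.fromRel_adj]

/-- The vertex set whose cross edges form our bond. -/
def PW (n k a m : ℕ) : Set (ZMod n ⊕ ZMod n) :=
  {v | match v with
       | Sum.inl i => i.val < a
       | Sum.inr i => i.val < k ∨ k + m ≤ i.val}

lemma PW_inl {i : ZMod n} : Sum.inl i ∈ PW n k a m ↔ i.val < a := Iff.rfl
lemma PW_inr {i : ZMod n} : Sum.inr i ∈ PW n k a m ↔ (i.val < k ∨ k + m ≤ i.val) := Iff.rfl

/-- abbreviation for the graph with the cross edges removed -/
def HH (n k a m : ℕ) : SimpleGraph (ZMod n ⊕ ZMod n) :=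
  (GPetersen n k).deleteEdges (crossEdges (GPetersen n k) (PW n k a m))

lemma HH_adj_in {u v : ZMod n ⊕ ZMod n} (h : (GPetersen n k).Adj u v)
    (hu : u ∈ PW n k a m) (hv : v ∈ PW n k a m) : (HH n k a m).Adj u v :=
  deleteCross_adj h ⟨fun _ => hv, fun _ => hu⟩

lemma HH_adj_out {u v : ZMod n ⊕ ZMod n} (h : (GPetersen n k).Adj u v)
    (hu : u ∉ PW n k a m) (hv : v ∉ PW n k a m) : (HH n k a m).Adj u v :=
  deleteCross_adj h ⟨fun h' => absurd h' hu, fun h' => absurd h' hv⟩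

lemma ne_of_val_ne' {s t : ℕ} (hs : s < n) (ht : t < n) (hst : s ≠ t) :
    (s : ZMod n) ≠ (t : ZMod n) := by
  intro h
  apply hst
  have := congrArg ZMod.val h
  rwa [ZMod.val_natCast_of_lt hs, ZMod.val_natCast_of_lt ht] at this

/-- outer arc reachability: every `x_t` with `t < a` reaches `x_0`. -/
lemma reach_outer_low (hn : 3 ≤ n) (han : a ≤ n) :
    ∀ t, t < a → (HH n k a m).Reachable (Sum.inl (t : ZMod n)) (Sum.inl (0 : ZMod n)) := by
  intro t
  induction t with
  | zero => intro _; rw [Nat.cast_zero]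
  | succ t ih =>
    intro ht
    have h1 : (GPetersen n k).Adj (Sum.inl ((t+1 : ℕ) : ZMod n)) (Sum.inl (t : ZMod n)) := by
      rw [gp_adj_inl_inl]
      constructor
      · exact ne_of_val_ne' (by omega) (by omega) (by omega)
      · right; push_cast; ring
    have h2 : (HH n k a m).Adj (Sum.inl ((t+1 : ℕ) : ZMod n)) (Sum.inl (t : ZMod n)) := by
      apply HH_adj_in h1 <;> rw [PW_inl, ZMod.val_natCast_of_lt (by omega)] <;> omega
    exact h2.reachable.trans (ih (by omega))

/-- outer arc reachability on the complement side: `x_{a+t}` reaches `x_a`. -/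
lemma reach_outer_high (hn : 3 ≤ n) (han : a < n) :
    ∀ t, a + t < n → (HH n k a m).Reachable (Sum.inl ((a + t : ℕ) : ZMod n)) (Sum.inl (a : ZMod n)) := by
  intro t
  induction t with
  | zero => intro _; rw [Nat.add_zero]
  | succ t ih =>
    intro ht
    have h1 : (GPetersen n k).Adj (Sum.inl ((a+t+1 : ℕ) : ZMod n)) (Sum.inl ((a+t : ℕ) : ZMod n)) := by
      rw [gp_adj_inl_inl]
      constructor
      · exact ne_of_val_ne' (by omega) (by omega) (by omega)
      · right; push_cast; ring
    have h2 : (HH n k a m).Adj (Sum.inl ((a+t+1 : ℕ) : ZMod n)) (Sum.inl ((a+t : ℕ) : ZMod n)) := by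
      apply HH_adj_out h1 <;> rw [PW_inl, ZMod.val_natCast_of_lt (by omega)] <;> omega
    exact h2.reachable.trans (ih (by omega))

end GP

section Inner
variable {n k a m : ℕ}

lemma kne (hn : 3 ≤ n) (hk1 : 1 ≤ k) (hk2 : 2*k < n) : (k : ZMod n) ≠ 0 := by
  have : ((0:ℕ) : ZMod n) = (0 : ZMod n) := by push_cast; rfl
  rw [← this]
  exact ne_of_val_ne' (by omega) (by omega) (by omega)

lemma gp_adj_step (hn : 3 ≤ n) (hk1 : 1 ≤ k) (hk2 : 2*k < n) (c : ℕ) :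
    (GPetersen n k).Adj (Sum.inr (c : ZMod n)) (Sum.inr ((c + k : ℕ) : ZMod n)) := by
  rw [gp_adj_inr_inr]
  refine ⟨?_, Or.inl (by push_cast; ring)⟩
  intro h
  apply kne hn hk1 hk2
  push_cast at h
  exact left_eq_add.mp h

lemma reach_inner_chain (hn : 3 ≤ n) (hk1 : 1 ≤ k) (hk2 : 2*k < n) (c : ℕ) :
    ∀ t, (∀ t' ≤ t, Sum.inr ((c + t'*k : ℕ) : ZMod n) ∈ PW n k a m) →
    (HH n k a m).Reachable (Sum.inr ((c:ℕ) : ZMod n)) (Sum.inr ((c + t*k : ℕ) : ZMod n)) := by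
  intro t
  induction t with
  | zero => intro _; rw [Nat.mul_comm, Nat.mul_zero, Nat.add_zero]
  | succ t ih =>
    intro hmem
    have h1 := gp_adj_step hn hk1 hk2 (c + t*k)
    have h2 : (HH n k a m).Adj (Sum.inr ((c + t*k : ℕ) : ZMod n))
        (Sum.inr ((c + (t+1)*k : ℕ) : ZMod n)) := by
      have he : c + t*k + k = c + (t+1)*k := by ring
      rw [← he]
      exact HH_adj_in h1 (hmem t (by omega)) (he ▸ hmem (t+1) (by omega))
    exact (ih (fun t' ht' => hmem t' (by omega))).trans h2.reachable

lemma exists_chain_to_rep (hn : 3 ≤ n) (hk1 : 1 ≤ k) (c : ℕ) :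
    ∃ t : ℕ, ((c + t*k : ℕ) : ZMod n) = ((c % (Nat.gcd n k) : ℕ) : ZMod n) := by
  haveI : NeZero n := ⟨by omega⟩
  set d := Nat.gcd n k with hd
  have hBez := Nat.gcd_eq_gcd_ab n k
  have hdk : (d : ZMod n) = (k : ZMod n) * ((Nat.gcdB n k : ℤ) : ZMod n) := by
    have : ((d : ℤ) : ZMod n) = (((n : ℤ) * Nat.gcdA n k + (k : ℤ) * Nat.gcdB n k : ℤ) : ZMod n) := by
      rw [← hBez]
    push_cast at this
    rw [ZMod.natCast_self] at this
    simpa using this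
  set z : ZMod n := - (((Nat.gcdB n k : ℤ) : ZMod n) * ((c / d : ℕ) : ZMod n)) with hz
  refine ⟨z.val, ?_⟩
  have hzz : ((z.val : ℕ) : ZMod n) = z := ZMod.natCast_rightInverse z
  have hmd : d * (c/d) + c % d = c := Nat.div_add_mod c d
  have : ((d * (c/d) : ℕ) : ZMod n) + ((c % d : ℕ) : ZMod n) = ((c:ℕ) : ZMod n) := by
    rw [← Nat.cast_add, hmd]
  push_cast
  rw [hzz, hz]
  push_cast at this
  rw [hdk] at this
  linear_combination -this

lemma reach_inner (hn : 3 ≤ n) (hk1 : 1 ≤ k) (hk2 : 2*k < n) (hm : m ≤ Nat.gcd n k)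
    (c : ℕ) (hcn : c < n) (hc : ¬ (k ≤ c ∧ c < k + m)) :
    (HH n k a m).Reachable (Sum.inr ((c:ℕ) : ZMod n))
      (Sum.inr ((c % Nat.gcd n k : ℕ) : ZMod n)) := by
  haveI : NeZero n := ⟨by omega⟩
  classical
  set d := Nat.gcd n k with hd
  have hdn : d ∣ n := Nat.gcd_dvd_left n k
  have hdkdvd : d ∣ k := Nat.gcd_dvd_right n k
  have hd1 : 0 < d := Nat.pos_of_ne_zero (fun h => by
    have := Nat.eq_zero_of_gcd_eq_zero_left (hd ▸ h); omega)
  have hP : ∃ t, ((c + t*k : ℕ) : ZMod n) = ((c % d : ℕ) : ZMod n) :=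
    exists_chain_to_rep hn hk1 c
  have hmem : ∀ t' ≤ Nat.find hP, Sum.inr ((c + t'*k : ℕ) : ZMod n) ∈ PW n k a m := by
    intro t' ht'
    rw [PW_inr, ZMod.val_natCast]
    by_contra hbad
    push_neg at hbad
    obtain ⟨hb1, hb2⟩ := hbad
    set w := (c + t'*k) % n with hw
    cases t' with
    | zero =>
      have : w = c := by rw [hw]; simp [Nat.mod_eq_of_lt hcn]
      omega
    | succ t'' =>
      have hlt : t'' < Nat.find hP := by omega
      apply Nat.find_min hP hlt
      have e1 : ((c + (t''+1)*k : ℕ) : ZMod n) = ((w:ℕ) : ZMod n) := by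
        rw [hw, ZMod.natCast_mod]
      have e3 : ((w:ℕ):ZMod n) = ((w-k:ℕ):ZMod n) + (k : ZMod n) := by
        rw [← Nat.cast_add]; congr 1; omega
      have e4 : ((c + t''*k : ℕ) : ZMod n) + (k:ZMod n) = ((w:ℕ):ZMod n) := by
        rw [← e1]; push_cast; ring
      have e2 : ((c + t''*k : ℕ) : ZMod n) = ((w - k : ℕ) : ZMod n) := by
        rw [e3] at e4; exact add_right_cancel e4
      have hmn : (c + t''*k) ≡ (w - k) [MOD n] := (ZMod.natCast_eq_natCast_iff _ _ _).mp e2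
      have hmd2 : (c + t''*k) ≡ (w - k) [MOD d] := Nat.ModEq.of_dvd hdn hmn
      obtain ⟨k', hk'⟩ := hdkdvd
      have h5 : (c + t''*k) % d = c % d := by
        rw [hk']
        have : c + t''*(d*k') = c + (t''*k')*d := by ring
        rw [this, Nat.add_mul_mod_self_right]
      have h6 : w - k = c % d := by
        unfold Nat.ModEq at hmd2
        have h7 : (w-k) % d = w - k := Nat.mod_eq_of_lt (by omega)
        omega
      rw [e2, h6]
  have := reach_inner_chain (a := a) (m := m) hn hk1 hk2 c (Nat.find hP) hmem
  rwa [Nat.find_spec hP] at this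

lemma reach_W_hub (hn : 3 ≤ n) (hk1 : 1 ≤ k) (hk2 : 2*k < n)
    (hda : Nat.gcd n k ≤ a) (han : a < n) (hm : m ≤ Nat.gcd n k)
    (u : ZMod n ⊕ ZMod n) (hu : u ∈ PW n k a m) :
    (HH n k a m).Reachable u (Sum.inl (0 : ZMod n)) := by
  haveI : NeZero n := ⟨by omega⟩
  have hdk : Nat.gcd n k ≤ k := Nat.le_of_dvd (by omega) (Nat.gcd_dvd_right n k)
  have hd1 : 0 < Nat.gcd n k := by
    apply Nat.pos_of_ne_zero
    intro h
    have := Nat.eq_zero_of_gcd_eq_zero_left h; omega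
  cases u with
  | inl i =>
    have h := reach_outer_low (k:=k) (m:=m) hn (le_of_lt han) i.val (by exact hu)
    rwa [ZMod.natCast_rightInverse i] at h
  | inr i =>
    have hcn : i.val < n := ZMod.val_lt i
    have hc : ¬ (k ≤ i.val ∧ i.val < k + m) := by
      rw [PW_inr] at hu; omega
    have h1 := reach_inner (a:=a) hn hk1 hk2 hm i.val hcn hc
    have hrd : i.val % Nat.gcd n k < Nat.gcd n k := Nat.mod_lt _ (by omega)
    have hadj : (GPetersen n k).Adj (Sum.inr ((i.val % Nat.gcd n k : ℕ) : ZMod n))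
        (Sum.inl ((i.val % Nat.gcd n k : ℕ) : ZMod n)) := (gp_adj_inl_inr.mpr rfl).symm
    have h2 : (HH n k a m).Adj (Sum.inr ((i.val % Nat.gcd n k : ℕ):ZMod n))
        (Sum.inl ((i.val % Nat.gcd n k : ℕ):ZMod n)) := by
      apply HH_adj_in hadj
      · rw [PW_inr, ZMod.val_natCast_of_lt (by omega)]; omega
      · rw [PW_inl, ZMod.val_natCast_of_lt (by omega)]; omega
    have h3 := reach_outer_low (k:=k) (m:=m) hn (le_of_lt han) (i.val % Nat.gcd n k) (by omega)
    have h4 := (h1.trans h2.reachable).trans h3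
    rwa [ZMod.natCast_rightInverse i] at h4

lemma reach_C_hub (hn : 3 ≤ n) (hk1 : 1 ≤ k) (hk2 : 2*k < n)
    (han : a < n) (ham : 0 < m → a ≤ k) (hm : m ≤ Nat.gcd n k)
    (u : ZMod n ⊕ ZMod n) (hu : u ∉ PW n k a m) :
    (HH n k a m).Reachable u (Sum.inl ((a:ℕ) : ZMod n)) := by
  haveI : NeZero n := ⟨by omega⟩
  cases u with
  | inl i =>
    have hia : a ≤ i.val := not_lt.mp (fun h => hu h)
    have h := reach_outer_high (k:=k) (m:=m) hn han (i.val - a)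
      (by have := ZMod.val_lt i; omega)
    have he : a + (i.val - a) = i.val := by omega
    rw [he] at h
    rwa [ZMod.natCast_rightInverse i] at h
  | inr i =>
    have hrem : k ≤ i.val ∧ i.val < k + m := by
      rw [PW_inr] at hu; push_neg at hu; omega
    have hm1 : 0 < m := by omega
    have hak := ham hm1
    have hkn : i.val < n := ZMod.val_lt i
    have hadj : (GPetersen n k).Adj (Sum.inr i) (Sum.inl i) := (gp_adj_inl_inr.mpr rfl).symm
    have h2 : (HH n k a m).Adj (Sum.inr i) (Sum.inl i) := by
      apply HH_adj_out hadj hu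
      rw [PW_inl]; omega
    have h := reach_outer_high (k:=k) (m:=m) hn han (i.val - a)
      (by omega)
    have he : a + (i.val - a) = i.val := by omega
    rw [he] at h
    rw [ZMod.natCast_rightInverse i] at h
    exact h2.reachable.trans h

section Count
variable {n k a m : ℕ}

lemma natCast_zmod_inj {s t : ℕ} (hs : s < n) (ht : t < n)
    (h : (s : ZMod n) = (t : ZMod n)) : s = t := by
  have := congrArg ZMod.val h
  rwa [ZMod.val_natCast_of_lt hs, ZMod.val_natCast_of_lt ht] at this

/-- the explicit bond -/
def BF (n k a m : ℕ) : Finset (Sym2 (ZMod n ⊕ ZMod n)) :=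
  (({s(Sum.inl ((a-1 : ℕ) : ZMod n), Sum.inl ((a:ℕ) : ZMod n)),
    s(Sum.inl ((n-1 : ℕ) : ZMod n), Sum.inl ((0:ℕ) : ZMod n))} : Finset (Sym2 (ZMod n ⊕ ZMod n))) ∪
  ((Finset.Ico a n \ Finset.Ico k (k+m)).image
      (fun t => s(Sum.inl ((t:ℕ) : ZMod n), Sum.inr ((t:ℕ) : ZMod n)))) ∪
  ((Finset.Ico k (k+m)).image
      (fun t => s(Sum.inr ((t:ℕ):ZMod n), Sum.inr ((t+k:ℕ):ZMod n))))) ∪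
  ((Finset.Ico k (k+m)).image
      (fun t => s(Sum.inr ((t:ℕ):ZMod n), Sum.inr ((t-k:ℕ):ZMod n))))

lemma gcd_le_k (hk1 : 1 ≤ k) : Nat.gcd n k ≤ k :=
  Nat.le_of_dvd (by omega) (Nat.gcd_dvd_right n k)

lemma two_k_gcd_le (hn : 3 ≤ n) (hk1 : 1 ≤ k) (hk2 : 2*k < n) :
    2*k + Nat.gcd n k ≤ n := by
  have h1 : Nat.gcd n k ∣ n - 2*k := by
    exact Nat.dvd_sub (Nat.gcd_dvd_left n k) (Dvd.dvd.mul_left (Nat.gcd_dvd_right n k) 2)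
  have h2 := Nat.le_of_dvd (by omega) h1
  omega

lemma BF_card (hn : 3 ≤ n) (hk1 : 1 ≤ k) (hk2 : 2*k < n) (ha1 : 1 ≤ a)
    (han : a < n) (ham : 0 < m → a ≤ k) (hm : m ≤ Nat.gcd n k) :
    (BF n k a m).card = n - a + m + 2 := by
  haveI : NeZero n := ⟨by omega⟩
  have hdk : Nat.gcd n k ≤ k := gcd_le_k hk1
  have h2kd : 2*k + Nat.gcd n k ≤ n := two_k_gcd_le hn hk1 hk2
  have hsub : Finset.Ico k (k+m) ⊆ Finset.Ico a n := by
    intro x hx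
    simp only [Finset.mem_Ico] at hx ⊢
    have := ham (by omega)
    omega
  have c1 : (({s(Sum.inl ((a-1 : ℕ) : ZMod n), Sum.inl ((a:ℕ) : ZMod n)),
      s(Sum.inl ((n-1 : ℕ) : ZMod n), Sum.inl ((0:ℕ) : ZMod n))}) :
        Finset (Sym2 (ZMod n ⊕ ZMod n))).card = 2 := by
    rw [Finset.card_insert_of_notMem, Finset.card_singleton]
    simp only [Finset.mem_singleton, Sym2.eq_iff, Sum.inl.injEq]
    rintro (⟨h1, h2⟩ | ⟨h1, h2⟩)
    · have := natCast_zmod_inj (by omega : a < n) (by omega : 0 < n) h2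
      omega
    · have e1 := natCast_zmod_inj (by omega : a-1 < n) (by omega : 0 < n) h1
      have e2 := natCast_zmod_inj (by omega : a < n) (by omega : n-1 < n) h2
      omega
  have c2 : ((Finset.Ico a n \ Finset.Ico k (k+m)).image
      (fun t => s(Sum.inl ((t:ℕ) : ZMod n), Sum.inr ((t:ℕ) : ZMod n)))).card = n - a - m := by
    rw [Finset.card_image_of_injOn, Finset.card_sdiff_of_subset hsub]
    · simp
    · intro x hx y hy hxy
      simp only [Finset.mem_coe, Finset.mem_sdiff, Finset.mem_Ico] at hx hy
      simp only [Sym2.eq_iff, Sum.inl.injEq, Sum.inr.injEq, reduceCtorEq,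
        and_false, false_and, or_false, false_or, and_self] at hxy
      exact natCast_zmod_inj (by omega) (by omega) hxy
  have c3 : ((Finset.Ico k (k+m)).image
      (fun t => (s(Sum.inr ((t:ℕ):ZMod n), Sum.inr ((t+k:ℕ):ZMod n)) :
        Sym2 (ZMod n ⊕ ZMod n)))).card = m := by
    rw [Finset.card_image_of_injOn, Nat.card_Ico]
    · omega
    · intro x hx y hy hxy
      simp only [Finset.mem_coe, Finset.mem_Ico] at hx hy
      simp only [Sym2.eq_iff, Sum.inr.injEq] at hxy
      rcases hxy with ⟨h1, -⟩ | ⟨h1, h2⟩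
      · exact natCast_zmod_inj (by omega) (by omega) h1
      · have e1 := natCast_zmod_inj (by omega) (by omega) h1
        have e2 := natCast_zmod_inj (by omega) (by omega) h2
        omega
  have c4 : ((Finset.Ico k (k+m)).image
      (fun t => (s(Sum.inr ((t:ℕ):ZMod n), Sum.inr ((t-k:ℕ):ZMod n)) :
        Sym2 (ZMod n ⊕ ZMod n)))).card = m := by
    rw [Finset.card_image_of_injOn, Nat.card_Ico]
    · omega
    · intro x hx y hy hxy
      simp only [Finset.mem_coe, Finset.mem_Ico] at hx hy
      simp only [Sym2.eq_iff, Sum.inr.injEq] at hxy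
      rcases hxy with ⟨h1, -⟩ | ⟨h1, h2⟩
      · exact natCast_zmod_inj (by omega) (by omega) h1
      · have e1 := natCast_zmod_inj (by omega) (by omega) h1
        have e2 := natCast_zmod_inj (by omega) (by omega) h2
        omega
  have d3 : Disjoint ({s(Sum.inl ((a-1 : ℕ) : ZMod n), Sum.inl ((a:ℕ) : ZMod n)),
      s(Sum.inl ((n-1 : ℕ) : ZMod n), Sum.inl ((0:ℕ) : ZMod n))} :
        Finset (Sym2 (ZMod n ⊕ ZMod n)))
      ((Finset.Ico a n \ Finset.Ico k (k+m)).image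
      (fun t => s(Sum.inl ((t:ℕ) : ZMod n), Sum.inr ((t:ℕ) : ZMod n)))) := by
    rw [Finset.disjoint_left]
    intro e he1 he2
    simp only [Finset.mem_insert, Finset.mem_singleton] at he1
    simp only [Finset.mem_image] at he2
    obtain ⟨t, -, rfl⟩ := he2
    rcases he1 with h | h <;>
      simp only [Sym2.eq_iff, Sum.inl.injEq, Sum.inr.injEq, reduceCtorEq,
        and_false, false_and, or_self] at h
  have d2 : Disjoint (({s(Sum.inl ((a-1 : ℕ) : ZMod n), Sum.inl ((a:ℕ) : ZMod n)),
      s(Sum.inl ((n-1 : ℕ) : ZMod n), Sum.inl ((0:ℕ) : ZMod n))} :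
        Finset (Sym2 (ZMod n ⊕ ZMod n))) ∪
      ((Finset.Ico a n \ Finset.Ico k (k+m)).image
      (fun t => s(Sum.inl ((t:ℕ) : ZMod n), Sum.inr ((t:ℕ) : ZMod n)))))
      ((Finset.Ico k (k+m)).image
      (fun t => s(Sum.inr ((t:ℕ):ZMod n), Sum.inr ((t+k:ℕ):ZMod n)))) := by
    rw [Finset.disjoint_left]
    intro e he1 he2
    simp only [Finset.mem_image] at he2
    obtain ⟨t, -, rfl⟩ := he2
    simp only [Finset.mem_union, Finset.mem_insert, Finset.mem_singleton,
      Finset.mem_image] at he1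
    rcases he1 with (h | h) | ⟨t', -, h⟩ <;>
      simp only [Sym2.eq_iff, Sum.inl.injEq, Sum.inr.injEq, reduceCtorEq,
        and_false, false_and, false_or, or_self] at h
  have d1 : Disjoint ((({s(Sum.inl ((a-1 : ℕ) : ZMod n), Sum.inl ((a:ℕ) : ZMod n)),
      s(Sum.inl ((n-1 : ℕ) : ZMod n), Sum.inl ((0:ℕ) : ZMod n))} :
        Finset (Sym2 (ZMod n ⊕ ZMod n))) ∪
      ((Finset.Ico a n \ Finset.Ico k (k+m)).image
      (fun t => s(Sum.inl ((t:ℕ) : ZMod n), Sum.inr ((t:ℕ) : ZMod n))))) ∪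
      ((Finset.Ico k (k+m)).image
      (fun t => s(Sum.inr ((t:ℕ):ZMod n), Sum.inr ((t+k:ℕ):ZMod n)))))
      ((Finset.Ico k (k+m)).image
      (fun t => s(Sum.inr ((t:ℕ):ZMod n), Sum.inr ((t-k:ℕ):ZMod n)))) := by
    rw [Finset.disjoint_left]
    intro e he1 he2
    simp only [Finset.mem_image] at he2
    obtain ⟨t, ht, rfl⟩ := he2
    simp only [Finset.mem_Ico] at ht
    simp only [Finset.mem_union, Finset.mem_insert, Finset.mem_singleton,
      Finset.mem_image, Finset.mem_Ico] at he1
    rcases he1 with ((h | h) | ⟨t', -, h⟩) | ⟨t', ht', h⟩ <;>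
      simp only [Sym2.eq_iff, Sum.inl.injEq, Sum.inr.injEq, reduceCtorEq,
        and_false, false_and, false_or, or_self] at h
    rcases h with ⟨h1, h2⟩ | ⟨h1, h2⟩
    · have e1 := natCast_zmod_inj (by omega : t' < n) (by omega : t < n) h1
      have e2 := natCast_zmod_inj (by omega : t'+k < n) (by omega : t-k < n) h2
      omega
    · have e1 := natCast_zmod_inj (by omega : t' < n) (by omega : t-k < n) h1
      have e2 := natCast_zmod_inj (by omega : t'+k < n) (by omega : t < n) h2
      omega
  rw [BF, Finset.card_union_of_disjoint d1, Finset.card_union_of_disjoint d2,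
      Finset.card_union_of_disjoint d3, c1, c2, c3, c4]
  have := ham
  rcases Nat.eq_zero_or_pos m with h | h
  · omega
  · have := ham h; omega

end Count

section CrossEq
variable {n k a m : ℕ}

lemma zmod_surj [NeZero n] (i : ZMod n) : ∃ c, c < n ∧ ((c:ℕ) : ZMod n) = i :=
  ⟨i.val, ZMod.val_lt i, ZMod.natCast_rightInverse i⟩

lemma cross_eq (hn : 3 ≤ n) (hk1 : 1 ≤ k) (hk2 : 2*k < n) (ha1 : 1 ≤ a)
    (hda : Nat.gcd n k ≤ a) (han : a < n) (ham : 0 < m → a ≤ k) (hm : m ≤ Nat.gcd n k) :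
    crossEdges (GPetersen n k) (PW n k a m) = ↑(BF n k a m) := by
  haveI : NeZero n := ⟨by omega⟩
  have hdk : Nat.gcd n k ≤ k := gcd_le_k hk1
  have h2kd : 2*k + Nat.gcd n k ≤ n := two_k_gcd_le hn hk1 hk2
  ext e
  simp only [BF, Finset.coe_union, Set.mem_union, Finset.mem_coe, Finset.mem_union,
    Finset.mem_insert, Finset.mem_singleton, Finset.mem_image, Finset.mem_sdiff,
    Finset.mem_Ico]
  constructor
  · rintro ⟨he, u, hu, v, hv, rfl⟩
    rw [SimpleGraph.mem_edgeSet] at he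
    rw [Set.mem_compl_iff] at hv
    cases u with
    | inl i =>
      cases v with
      | inl j =>
        obtain ⟨ci, hci, rfl⟩ := zmod_surj i
        obtain ⟨cj, hcj, rfl⟩ := zmod_surj j
        rw [PW_inl, ZMod.val_natCast_of_lt hci] at hu
        rw [PW_inl, ZMod.val_natCast_of_lt hcj] at hv
        push_neg at hv
        rcases gp_adj_inl_inl.mp he with ⟨hne, hor | hor⟩
        · have hjval : cj = (ci+1) % n := by
            have := congrArg ZMod.val hor
            rwa [← Nat.cast_add_one, ZMod.val_natCast_of_lt hcj, ZMod.val_natCast] at this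
          by_cases hend : ci + 1 = n
          · exfalso
            rw [hend, Nat.mod_self] at hjval
            omega
          · rw [Nat.mod_eq_of_lt (by omega)] at hjval
            refine Or.inl (Or.inl (Or.inl (Or.inl ?_)))
            rw [show ci = a - 1 by omega, show cj = a by omega]
        · have hival : ci = (cj+1) % n := by
            have := congrArg ZMod.val hor
            rwa [← Nat.cast_add_one, ZMod.val_natCast_of_lt hci, ZMod.val_natCast] at this
          by_cases hend : cj + 1 = n
          · rw [hend, Nat.mod_self] at hival
            refine Or.inl (Or.inl (Or.inl (Or.inr ?_)))
            rw [show ci = 0 by omega, show cj = n - 1 by omega]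
            exact Sym2.eq_swap
          · exfalso
            rw [Nat.mod_eq_of_lt (by omega)] at hival
            omega
      | inr j =>
        obtain ⟨ci, hci, rfl⟩ := zmod_surj i
        obtain ⟨cj, hcj, rfl⟩ := zmod_surj j
        rw [PW_inl, ZMod.val_natCast_of_lt hci] at hu
        rw [PW_inr, ZMod.val_natCast_of_lt hcj] at hv
        push_neg at hv
        have := ham (by omega)
        have hji := gp_adj_inl_inr.mp he
        have : cj = ci := natCast_zmod_inj hcj hci hji
        omega
    | inr i =>
      cases v with
      | inl j =>
        obtain ⟨ci, hci, rfl⟩ := zmod_surj i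
        obtain ⟨cj, hcj, rfl⟩ := zmod_surj j
        rw [PW_inr, ZMod.val_natCast_of_lt hci] at hu
        rw [PW_inl, ZMod.val_natCast_of_lt hcj] at hv
        push_neg at hv
        have hij : ci = cj := natCast_zmod_inj hci hcj (gp_adj_inl_inr.mp he.symm)
        subst hij
        refine Or.inl (Or.inl (Or.inr ⟨ci, ⟨⟨by omega, by omega⟩, by omega⟩, ?_⟩))
        exact Sym2.eq_swap
      | inr j =>
        obtain ⟨ci, hci, rfl⟩ := zmod_surj i
        obtain ⟨cj, hcj, rfl⟩ := zmod_surj j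
        rw [PW_inr, ZMod.val_natCast_of_lt hci] at hu
        rw [PW_inr, ZMod.val_natCast_of_lt hcj] at hv
        push_neg at hv
        have hm1 : 0 < m := by omega
        rcases gp_adj_inr_inr.mp he with ⟨hne, hor | hor⟩
        · -- ↑cj = ↑ci + ↑k, so ci = cj - k (mod n)
          have hval : cj = (ci+k) % n := by
            have := congrArg ZMod.val hor
            rwa [← Nat.cast_add, ZMod.val_natCast_of_lt hcj, ZMod.val_natCast] at this
          by_cases hend : ci + k < n
          · -- cj = ci + k, removed cj: ci = cj - k
            rw [Nat.mod_eq_of_lt hend] at hval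
            refine Or.inr ⟨cj, ⟨by omega, by omega⟩, ?_⟩
            rw [show cj - k = ci by omega]
            exact Sym2.eq_swap
          · -- wrap: cj = ci + k - n, but then ci = cj + (n - k) ... show impossible:
            -- ci < n, ci + k ≥ n so cj = ci + k - n ≤ k - 1 < k, contra removed cj ≥ k
            exfalso
            have : cj = ci + k - n := by
              rw [Nat.mod_eq_sub_mod (by omega), Nat.mod_eq_of_lt (by omega)] at hval
              omega
            omega
        · -- ↑ci = ↑cj + ↑k
          have hval : ci = (cj+k) % n := by
            have := congrArg ZMod.val hor
            rwa [← Nat.cast_add, ZMod.val_natCast_of_lt hci, ZMod.val_natCast] at this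
          have hend : cj + k < n := by omega
          rw [Nat.mod_eq_of_lt hend] at hval
          refine Or.inl (Or.inr ⟨cj, ⟨by omega, by omega⟩, ?_⟩)
          rw [← hval]
          exact Sym2.eq_swap
  · intro hcase
    have hc0 : ((0:ℕ) : ZMod n) = (0 : ZMod n) := by push_cast; rfl
    rcases hcase with (((h | h) | ⟨t, ⟨⟨ht1, ht2⟩, ht3⟩, rfl⟩) | ⟨t, ⟨ht1, ht2⟩, rfl⟩) |
      ⟨t, ⟨ht1, ht2⟩, rfl⟩
    · -- e = s(x_{a-1}, x_a)
      subst h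
      have hadj : (GPetersen n k).Adj (Sum.inl ((a-1 : ℕ) : ZMod n))
          (Sum.inl ((a:ℕ) : ZMod n)) := by
        rw [gp_adj_inl_inl]
        refine ⟨ne_of_val_ne' (by omega) (by omega) (by omega), Or.inl ?_⟩
        rw [show (a:ℕ) = (a-1)+1 by omega]
        push_cast
        ring
      refine ⟨(SimpleGraph.mem_edgeSet _).mpr hadj, Sum.inl ((a-1:ℕ) : ZMod n), ?_,
        Sum.inl ((a:ℕ) : ZMod n), ?_, rfl⟩
      · rw [PW_inl, ZMod.val_natCast_of_lt (by omega)]; omega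
      · rw [Set.mem_compl_iff, PW_inl, ZMod.val_natCast_of_lt (by omega)]; omega
    · -- e = s(x_{n-1}, x_0)
      subst h
      have hadj : (GPetersen n k).Adj (Sum.inl ((n-1 : ℕ) : ZMod n))
          (Sum.inl ((0:ℕ) : ZMod n)) := by
        rw [gp_adj_inl_inl]
        refine ⟨ne_of_val_ne' (by omega) (by omega) (by omega), Or.inl ?_⟩
        have h1 : ((n-1+1:ℕ):ZMod n) = ((n-1:ℕ):ZMod n) + 1 := by push_cast; ring
        rw [show (n-1)+1 = n by omega, ZMod.natCast_self] at h1
        rw [hc0, ← h1]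
      refine ⟨(SimpleGraph.mem_edgeSet _).mpr hadj, Sum.inl ((0:ℕ) : ZMod n), ?_,
        Sum.inl ((n-1:ℕ) : ZMod n), ?_, Sym2.eq_swap.symm⟩
      · rw [PW_inl, ZMod.val_natCast_of_lt (by omega)]; omega
      · rw [Set.mem_compl_iff, PW_inl, ZMod.val_natCast_of_lt (by omega)]; omega
    · -- spoke at t
      have hadj : (GPetersen n k).Adj (Sum.inl ((t : ℕ) : ZMod n))
          (Sum.inr ((t:ℕ) : ZMod n)) := gp_adj_inl_inr.mpr rfl
      refine ⟨(SimpleGraph.mem_edgeSet _).mpr hadj, Sum.inr ((t:ℕ) : ZMod n), ?_,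
        Sum.inl ((t:ℕ) : ZMod n), ?_, Sym2.eq_swap.symm⟩
      · rw [PW_inr, ZMod.val_natCast_of_lt (by omega)]; omega
      · rw [Set.mem_compl_iff, PW_inl, ZMod.val_natCast_of_lt (by omega)]; omega
    · -- inner edge s(y_t, y_{t+k})
      have hadj := gp_adj_step hn hk1 hk2 t
      refine ⟨(SimpleGraph.mem_edgeSet _).mpr hadj, Sum.inr ((t+k:ℕ) : ZMod n), ?_,
        Sum.inr ((t:ℕ) : ZMod n), ?_, Sym2.eq_swap.symm⟩
      · rw [PW_inr, ZMod.val_natCast_of_lt (by omega)]; omega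
      · rw [Set.mem_compl_iff, PW_inr, ZMod.val_natCast_of_lt (by omega)]
        push_neg
        omega
    · -- inner edge s(y_t, y_{t-k})
      have hadj := gp_adj_step hn hk1 hk2 (t-k)
      rw [show t-k+k = t by omega] at hadj
      refine ⟨(SimpleGraph.mem_edgeSet _).mpr hadj.symm, Sum.inr ((t-k:ℕ) : ZMod n), ?_,
        Sum.inr ((t:ℕ) : ZMod n), ?_, Sym2.eq_swap.symm⟩
      · rw [PW_inr, ZMod.val_natCast_of_lt (by omega)]; omega
      · rw [Set.mem_compl_iff, PW_inr, ZMod.val_natCast_of_lt (by omega)]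
        push_neg
        omega

end CrossEq

/-- the co-spectrum of `P(n,k)` contains every integer from `3` to `n + 2`. -/
theorem gPetersen_cospectrum_contains (n k : ℕ) (hn : 3 ≤ n) (hk1 : 1 ≤ k)
    (hk2 : 2 * k < n) :
    ∀ s : ℕ, 3 ≤ s → s ≤ n + 2 →
      ∃ B : Set (Sym2 (ZMod n ⊕ ZMod n)), IsBond (GPetersen n k) B ∧ B.ncard = s := by
  intro s hs3 hs2
  haveI : NeZero n := ⟨by omega⟩
  have hdk : Nat.gcd n k ≤ k := gcd_le_k hk1
  have hd1 : 0 < Nat.gcd n k := Nat.pos_of_ne_zero (fun h => by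
    have := Nat.eq_zero_of_gcd_eq_zero_left h; omega)
  have h2kd : 2*k + Nat.gcd n k ≤ n := two_k_gcd_le hn hk1 hk2
  obtain ⟨a, m, ha1, hda, han, hm, ham, hs⟩ :
      ∃ a m, 1 ≤ a ∧ Nat.gcd n k ≤ a ∧ a < n ∧ m ≤ Nat.gcd n k ∧ (0 < m → a ≤ k) ∧
        n - a + m + 2 = s := by
    by_cases h : s ≤ n - Nat.gcd n k + 2
    · exact ⟨n + 2 - s, 0, by omega, by omega, by omega, by omega, by omega, by omega⟩
    · exact ⟨Nat.gcd n k, s - (n - Nat.gcd n k + 2), by omega, by omega, by omega, by omega,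
        by omega, by omega⟩
  refine ⟨crossEdges (GPetersen n k) (PW n k a m), ?_, ?_⟩
  · apply isBond_crossEdges
    · intro u v hu hv
      exact (reach_W_hub hn hk1 hk2 hda han hm u hu).trans
        (reach_W_hub hn hk1 hk2 hda han hm v hv).symm
    · intro u v hu hv
      exact (reach_C_hub hn hk1 hk2 han ham hm u hu).trans
        (reach_C_hub hn hk1 hk2 han ham hm v hv).symm
    · rw [cross_eq hn hk1 hk2 ha1 hda han ham hm]
      refine ⟨s(Sum.inl ((n-1:ℕ):ZMod n), Sum.inl ((0:ℕ):ZMod n)), ?_⟩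
      simp [BF]
  · rw [cross_eq hn hk1 hk2 ha1 hda han ham hm, Set.ncard_coe_finset,
      BF_card hn hk1 hk2 ha1 han ham hm]
    omega
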